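/- If X = (X_1,...,X_p) and Y = (Y_1,...,Y_q) are jointly Gaussian centered random vectors that are not independent, then the random variables ‖X‖² and ‖Y‖² are not independent (indeed their covariance is strictly positive). -/

import Mathlib

open Real MeasureTheory ProbabilityTheory Filter
open scoped ENNReal NNReal

lemma aux_even_pow_le {b : ℝ} (hb : 0 < b) (m : ℕ) (x : ℝ) :
    x ^ (2 * m) ≤ (m.factorial * (2 / b) ^ m) * Real.exp (b / 2 * x ^ 2) := by
  have ht : (0:ℝ) ≤ b / 2 * x ^ 2 := by positivity
  have h1 : (b / 2 * x ^ 2) ^ m / m.factorial ≤ Real.exp (b / 2 * x ^ 2) :=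
    Real.pow_div_factorial_le_exp _ ht m
  have h2 : x ^ (2 * m) = (b / 2 * x ^ 2) ^ m * (2 / b) ^ m := by
    rw [pow_mul, ← mul_pow]
    congr 1
    field_simp
  rw [h2]
  have hf : (0:ℝ) < m.factorial := by positivity
  calc (b / 2 * x ^ 2) ^ m * (2 / b) ^ m
      ≤ (m.factorial * Real.exp (b / 2 * x ^ 2)) * (2 / b) ^ m := by
        apply mul_le_mul_of_nonneg_right _ (by positivity)
        have := (div_le_iff₀ hf).mp h1
        linarith
    _ = (m.factorial * (2 / b) ^ m) * Real.exp (b / 2 * x ^ 2) := by ring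

lemma aux_integrable_even {b : ℝ} (hb : 0 < b) (m : ℕ) :
    Integrable (fun x : ℝ => x ^ (2 * m) * Real.exp (-b * x ^ 2)) := by
  have hmeas : AEStronglyMeasurable (fun x : ℝ => x ^ (2 * m) * Real.exp (-b * x ^ 2)) volume :=
    ((measurable_id.pow_const _).mul ((measurable_id.pow_const 2).const_mul (-b)).exp).aestronglyMeasurable
  refine Integrable.mono' ((integrable_exp_neg_mul_sq (half_pos hb)).const_mul
    (m.factorial * (2 / b) ^ m)) hmeas (Filter.Eventually.of_forall fun x => ?_)
  have h1 : x ^ (2 * m) ≤ (m.factorial * (2 / b) ^ m) * Real.exp (b / 2 * x ^ 2) :=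
    aux_even_pow_le hb m x
  have hx : (0:ℝ) ≤ x ^ (2*m) := by rw [pow_mul]; positivity
  rw [Real.norm_eq_abs, abs_mul, abs_of_nonneg hx, abs_of_nonneg (Real.exp_pos _).le]
  calc x ^ (2 * m) * Real.exp (-b * x ^ 2)
      ≤ ((m.factorial * (2 / b) ^ m) * Real.exp (b / 2 * x ^ 2)) * Real.exp (-b * x ^ 2) :=
        mul_le_mul_of_nonneg_right h1 (Real.exp_pos _).le
    _ = (m.factorial * (2 / b) ^ m) * Real.exp (-(b/2) * x ^ 2) := by
        rw [mul_assoc, ← Real.exp_add]; ring_nf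

lemma aux_integrable_pow {b : ℝ} (hb : 0 < b) (n : ℕ) :
    Integrable (fun x : ℝ => x ^ n * Real.exp (-b * x ^ 2)) := by
  have hmeas : AEStronglyMeasurable (fun x : ℝ => x ^ n * Real.exp (-b * x ^ 2)) volume :=
    ((measurable_id.pow_const _).mul ((measurable_id.pow_const 2).const_mul (-b)).exp).aestronglyMeasurable
  have hbig : Integrable (fun x : ℝ => x ^ (2 * n) * Real.exp (-b * x ^ 2)
      + Real.exp (-b * x ^ 2)) :=
    (aux_integrable_even hb n).add (by simpa using aux_integrable_even hb 0)
  refine Integrable.mono' hbig hmeas (Filter.Eventually.of_forall fun x => ?_)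
  rw [Real.norm_eq_abs, abs_mul, abs_of_nonneg (Real.exp_pos _).le]
  have h1 : |x ^ n| ≤ x ^ (2 * n) + 1 := by
    have e1 : |x ^ n| = |x| ^ n := abs_pow x n
    have e2 : x ^ (2 * n) = (|x| ^ n) ^ 2 := by
      rw [pow_mul, ← sq_abs, ← pow_mul, mul_comm 2 n, pow_mul]
    have ht : (0:ℝ) ≤ |x| ^ n := by positivity
    rw [e1, e2]
    nlinarith [sq_nonneg (|x| ^ n - 1)]
  have := mul_le_mul_of_nonneg_right h1 (Real.exp_pos (-b * x^2)).le
  linarith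

lemma aux_ftc {b : ℝ} (hb : 0 < b) (k : ℕ) :
    ((k:ℝ) + 1) * ∫ x : ℝ, x ^ k * Real.exp (-b * x ^ 2)
      = 2 * b * ∫ x : ℝ, x ^ (k + 2) * Real.exp (-b * x ^ 2) := by
  have hderiv : ∀ x : ℝ, HasDerivAt (fun x : ℝ => x ^ (k+1) * Real.exp (-b * x ^ 2))
      (((k:ℝ)+1) * (x ^ k * Real.exp (-b * x ^ 2))
        - 2 * b * (x ^ (k+2) * Real.exp (-b * x ^ 2))) x := by
    intro x
    have h2 : HasDerivAt (fun y : ℝ => Real.exp (-b * y ^ 2))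
        (Real.exp (-b * x ^ 2) * (-b * (2 * x ^ 1))) x :=
      (((hasDerivAt_pow 2 x).const_mul (-b)).exp)
    refine ((hasDerivAt_pow (k+1) x).fun_mul h2).congr_deriv ?_
    push_cast
    ring
  have hint : Integrable (fun x : ℝ => ((k:ℝ)+1) * (x ^ k * Real.exp (-b * x ^ 2))
      - 2 * b * (x ^ (k+2) * Real.exp (-b * x ^ 2))) :=
    ((aux_integrable_pow hb k).const_mul _).sub ((aux_integrable_pow hb (k+2)).const_mul _)
  have h0 := integral_eq_zero_of_hasDerivAt_of_integrable hderiv hint (aux_integrable_pow hb (k+1))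
  rw [integral_sub ((aux_integrable_pow hb k).const_mul _)
      ((aux_integrable_pow hb (k+2)).const_mul _), integral_const_mul, integral_const_mul,
      sub_eq_zero] at h0
  exact h0

lemma gauss_pdf_eq {v : ℝ≥0} (x : ℝ) :
    gaussianPDFReal 0 v x = (√(2 * π * v))⁻¹ * Real.exp (-(((2:ℝ) * v)⁻¹) * x ^ 2) := by
  rw [gaussianPDFReal]
  congr 1
  rw [sub_zero, neg_div, div_eq_mul_inv, mul_comm, neg_mul]

lemma gauss_integral_eq {v : ℝ≥0} (hv : v ≠ 0) (g : ℝ → ℝ) :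
    ∫ x, g x ∂(gaussianReal 0 v) = ∫ x, gaussianPDFReal 0 v x * g x := by
  rw [gaussianReal_of_var_ne_zero 0 hv,
    show gaussianPDF 0 v = (fun x => ((gaussianPDFReal 0 v x).toNNReal : ℝ≥0∞)) from rfl,
    integral_withDensity_eq_integral_smul (measurable_gaussianPDFReal 0 v).real_toNNReal g]
  congr 1
  funext x
  rw [NNReal.smul_def, smul_eq_mul, Real.coe_toNNReal _ (gaussianPDFReal_nonneg 0 v x)]

lemma gauss_integrable_pow (v : ℝ≥0) (n : ℕ) :
    Integrable (fun x : ℝ => x ^ n) (gaussianReal 0 v) := by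
  by_cases hv : v = 0
  · rw [hv, gaussianReal_zero_var]
    exact (integrable_congr (ae_eq_dirac (fun x : ℝ => x ^ n))).mpr (integrable_const _)
  have hb : (0:ℝ) < ((2:ℝ) * v)⁻¹ := by
    have : (0:ℝ) < v := lt_of_le_of_ne (v.coe_nonneg) (by exact_mod_cast (Ne.symm hv))
    positivity
  rw [gaussianReal_of_var_ne_zero 0 hv,
    show gaussianPDF 0 v = (fun x => ((gaussianPDFReal 0 v x).toNNReal : ℝ≥0∞)) from rfl,
    integrable_withDensity_iff_integrable_smul (measurable_gaussianPDFReal 0 v).real_toNNReal]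
  have : (fun x : ℝ => ((gaussianPDFReal 0 v x).toNNReal : ℝ) • x ^ n)
      = fun x : ℝ => (√(2 * π * v))⁻¹ * (x ^ n * Real.exp (-(((2:ℝ) * v)⁻¹) * x ^ 2)) := by
    funext x
    rw [smul_eq_mul, Real.coe_toNNReal _ (gaussianPDFReal_nonneg 0 v x), gauss_pdf_eq]
    ring
  rw [show (fun x : ℝ => ((gaussianPDFReal 0 v x).toNNReal • x ^ n)) =
    (fun x : ℝ => ((gaussianPDFReal 0 v x).toNNReal : ℝ) • x ^ n) from rfl, this]
  exact (aux_integrable_pow hb n).const_mul _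

lemma gauss_moments (v : ℝ≥0) :
    (∫ x, x ^ 2 ∂(gaussianReal 0 v)) = (v:ℝ)
      ∧ (∫ x, x ^ 4 ∂(gaussianReal 0 v)) = 3 * (v:ℝ) ^ 2 := by
  by_cases hv : v = 0
  · subst hv
    rw [gaussianReal_zero_var]
    constructor <;> simp [integral_dirac]
  have hvpos : (0:ℝ) < v := lt_of_le_of_ne v.coe_nonneg (by exact_mod_cast (Ne.symm hv))
  set b : ℝ := ((2:ℝ) * v)⁻¹ with hbdef
  have hb : 0 < b := by positivity
  set C : ℝ := (√(2 * π * v))⁻¹ with hCdef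
  have hpdf : ∀ x : ℝ, gaussianPDFReal 0 v x = C * Real.exp (-b * x ^ 2) := fun x =>
    gauss_pdf_eq x
  set J0 : ℝ := ∫ x : ℝ, x ^ 0 * Real.exp (-b * x ^ 2) with hJ0def
  set J2 : ℝ := ∫ x : ℝ, x ^ 2 * Real.exp (-b * x ^ 2) with hJ2def
  set J4 : ℝ := ∫ x : ℝ, x ^ 4 * Real.exp (-b * x ^ 2) with hJ4def
  have hJ0 : C * J0 = 1 := by
    rw [hJ0def, ← integral_const_mul, show (fun x : ℝ => C * (x ^ 0 * Real.exp (-b * x ^ 2)))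
      = gaussianPDFReal 0 v from by funext x; rw [hpdf x]; ring]
    exact integral_gaussianPDFReal_eq_one 0 hv
  have h2 := aux_ftc hb 0
  have h4 := aux_ftc hb 2
  norm_num at h2 h4
  replace h2 : J0 = 2 * b * J2 := by
    rw [hJ0def, hJ2def]
    simp only [pow_zero, one_mul, neg_mul]
    exact h2
  replace h4 : 3 * J2 = 2 * b * J4 := by
    rw [hJ2def, hJ4def]
    simp only [neg_mul]
    exact h4
  have hm2 : (∫ x, x ^ 2 ∂(gaussianReal 0 v)) = C * J2 := by
    rw [gauss_integral_eq hv, hJ2def, ← integral_const_mul]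
    congr 1
    funext x
    rw [hpdf x]
    ring
  have hm4 : (∫ x, x ^ 4 ∂(gaussianReal 0 v)) = C * J4 := by
    rw [gauss_integral_eq hv, hJ4def, ← integral_const_mul]
    congr 1
    funext x
    rw [hpdf x]
    ring
  have hb2 : 2 * b = (v:ℝ)⁻¹ := by
    rw [hbdef, mul_inv]
    field_simp
  have hCJ2 : C * J2 = v := by
    have h1 : C * J0 = C * (2 * b * J2) := by rw [← h2]
    rw [hJ0] at h1
    rw [hb2] at h1
    field_simp at h1
    nlinarith [h1]
  have hCJ4 : C * J4 = 3 * (v:ℝ) ^ 2 := by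
    have h1 : C * (3 * J2) = C * (2 * b * J4) := by rw [h4]
    rw [hb2] at h1
    have h3 : 3 * (C * J2) = (v:ℝ)⁻¹ * (C * J4) := by ring_nf; ring_nf at h1; linarith
    rw [hCJ2] at h3
    field_simp at h3
    nlinarith [h3]
  exact ⟨by rw [hm2, hCJ2], by rw [hm4, hCJ4]⟩

lemma gauss_rv {Ω : Type*} [MeasureSpace Ω] (L : Ω → ℝ) (hL : Measurable L) {v : ℝ≥0}
    (h : Measure.map L ℙ = gaussianReal 0 v) :
    (∀ n : ℕ, Integrable (fun ω => (L ω) ^ n) ℙ)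
      ∧ (∫ ω, (L ω) ^ 4) = 3 * (∫ ω, (L ω) ^ 2) ^ 2 := by
  have hint : ∀ n : ℕ, Integrable (fun ω => (L ω) ^ n) ℙ := by
    intro n
    have h1 := gauss_integrable_pow v n
    rw [← h] at h1
    exact (integrable_map_measure (measurable_id.pow_const n).aestronglyMeasurable
      hL.aemeasurable).mp h1
  have hval : ∀ n : ℕ, (∫ ω, (L ω) ^ n) = ∫ x, x ^ n ∂(gaussianReal 0 v) := by
    intro n
    rw [← h]
    exact (integral_map hL.aemeasurable
      ((measurable_id.pow_const n).aestronglyMeasurable)).symm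
  obtain ⟨hq2, hq4⟩ := gauss_moments v
  exact ⟨hint, by rw [hval 4, hval 2, hq4, hq2]⟩

lemma pair_moment {Ω : Type*} [MeasureSpace Ω] [IsProbabilityMeasure (ℙ : Measure Ω)]
    (U V : Ω → ℝ) (hU : Measurable U) (hV : Measurable V)
    (hlin : ∀ a c : ℝ, ∃ v : ℝ≥0,
      Measure.map (fun ω => a * U ω + c * V ω) ℙ = gaussianReal 0 v) :
    Integrable (fun ω => U ω ^ 2) ℙ ∧ Integrable (fun ω => V ω ^ 2) ℙ
    ∧ Integrable (fun ω => U ω ^ 2 * V ω ^ 2) ℙ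
    ∧ (∫ ω, U ω ^ 2 * V ω ^ 2)
        = (∫ ω, U ω ^ 2) * (∫ ω, V ω ^ 2) + 2 * (∫ ω, U ω * V ω) ^ 2 := by
  -- moments of U
  obtain ⟨vU, hvU⟩ := hlin 1 0
  have hUeq : (fun ω => (1:ℝ) * U ω + 0 * V ω) = U := by funext ω; ring
  rw [hUeq] at hvU
  obtain ⟨hUint, hU4⟩ := gauss_rv U hU hvU
  obtain ⟨vV, hvV⟩ := hlin 0 1
  have hVeq : (fun ω => (0:ℝ) * U ω + 1 * V ω) = V := by funext ω; ring
  rw [hVeq] at hvV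
  obtain ⟨hVint, hV4⟩ := gauss_rv V hV hvV
  obtain ⟨vP, hvP⟩ := hlin 1 1
  have hPeq : (fun ω => (1:ℝ) * U ω + 1 * V ω) = fun ω => U ω + V ω := by funext ω; ring
  rw [hPeq] at hvP
  obtain ⟨hPint, hP4⟩ := gauss_rv (fun ω => U ω + V ω) (hU.add hV) hvP
  obtain ⟨vM, hvM⟩ := hlin 1 (-1)
  have hMeq : (fun ω => (1:ℝ) * U ω + (-1) * V ω) = fun ω => U ω - V ω := by funext ω; ring
  rw [hMeq] at hvM
  obtain ⟨hMint, hM4⟩ := gauss_rv (fun ω => U ω - V ω) (hU.sub hV) hvM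
  -- integrability of products
  have hUV : Integrable (fun ω => U ω * V ω) ℙ := by
    refine Integrable.mono' (((hUint 2).add (hVint 2)).const_mul (1/2))
      (hU.mul hV).aestronglyMeasurable (Filter.Eventually.of_forall fun ω => ?_)
    simp only [Pi.add_apply]
    rw [Real.norm_eq_abs, abs_mul]
    nlinarith [sq_nonneg (|U ω| - |V ω|), sq_abs (U ω), sq_abs (V ω), abs_nonneg (U ω),
      abs_nonneg (V ω)]
  have hU2V2 : Integrable (fun ω => U ω ^ 2 * V ω ^ 2) ℙ := by
    refine Integrable.mono' (((hUint 4).add (hVint 4)).const_mul (1/2))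
      (((hU.pow_const 2).mul (hV.pow_const 2))).aestronglyMeasurable
      (Filter.Eventually.of_forall fun ω => ?_)
    simp only [Pi.add_apply]
    rw [Real.norm_eq_abs, abs_mul, abs_of_nonneg (sq_nonneg (U ω)), abs_of_nonneg (sq_nonneg (V ω))]
    nlinarith [sq_nonneg (U ω ^ 2 - V ω ^ 2)]
  have IA : Integrable (fun ω => U ω ^ 2 + 2 * (U ω * V ω)) ℙ := (hUint 2).add (hUV.const_mul 2)
  have IB : Integrable (fun ω => U ω ^ 2 + (-2) * (U ω * V ω)) ℙ :=
    (hUint 2).add (hUV.const_mul (-2))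
  have IC : Integrable (fun ω => 12 * (U ω ^ 2 * V ω ^ 2) + 2 * V ω ^ 4) ℙ :=
    (hU2V2.const_mul 12).add ((hVint 4).const_mul 2)
  -- second moments of P and M
  have eP2 : (∫ ω, (U ω + V ω) ^ 2)
      = (∫ ω, U ω ^ 2) + 2 * (∫ ω, U ω * V ω) + ∫ ω, V ω ^ 2 := by
    have e : (fun ω => (U ω + V ω) ^ 2)
        = fun ω => U ω ^ 2 + 2 * (U ω * V ω) + V ω ^ 2 := by funext ω; ring
    rw [e, integral_add IA (hVint 2), integral_add (hUint 2) (hUV.const_mul 2),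
      integral_const_mul]
  have eM2 : (∫ ω, (U ω - V ω) ^ 2)
      = (∫ ω, U ω ^ 2) - 2 * (∫ ω, U ω * V ω) + ∫ ω, V ω ^ 2 := by
    have e : (fun ω => (U ω - V ω) ^ 2)
        = fun ω => U ω ^ 2 + (-2) * (U ω * V ω) + V ω ^ 2 := by funext ω; ring
    rw [e, integral_add IB (hVint 2), integral_add (hUint 2) (hUV.const_mul (-2)),
      integral_const_mul]
    ring
  -- fourth moment sum
  have ePM : (∫ ω, (U ω + V ω) ^ 4) + (∫ ω, (U ω - V ω) ^ 4)
      = 2 * (∫ ω, U ω ^ 4) + 12 * (∫ ω, U ω ^ 2 * V ω ^ 2) + 2 * (∫ ω, V ω ^ 4) := by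
    rw [← integral_add (hPint 4) (hMint 4)]
    have e : (fun ω => (U ω + V ω) ^ 4 + (U ω - V ω) ^ 4)
        = fun ω => 2 * U ω ^ 4 + (12 * (U ω ^ 2 * V ω ^ 2) + 2 * V ω ^ 4) := by funext ω; ring
    rw [e, integral_add ((hUint 4).const_mul 2) IC,
      integral_add (hU2V2.const_mul 12) ((hVint 4).const_mul 2), integral_const_mul,
      integral_const_mul, integral_const_mul]
    ring
  refine ⟨hUint 2, hVint 2, hU2V2, ?_⟩
  rw [eP2] at hP4
  rw [eM2] at hM4
  linear_combination (hP4 + hM4 - 2 * hU4 - 2 * hV4 - ePM) / 12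

/-- If `X ∈ ℝ^p` and `Y ∈ ℝ^q` are jointly Gaussian centered random vectors that are not
independent (some cross-covariance `Cov(X_i, Y_j) = E[X_i Y_j]` is nonzero), then
`Cov(‖X‖², ‖Y‖²) > 0`; in particular `‖X‖²` and `‖Y‖²` are not independent. -/
theorem stmt_2
    {Ω : Type*} [MeasureSpace Ω] [IsProbabilityMeasure (ℙ : Measure Ω)]
    {p q : ℕ} (X : Ω → Fin p → ℝ) (Y : Ω → Fin q → ℝ)
    (hX : Measurable X) (hY : Measurable Y)
    (hGauss : ∀ (a : Fin p → ℝ) (b : Fin q → ℝ), ∃ v : NNReal,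
      Measure.map (fun ω => (∑ i, a i * X ω i) + ∑ j, b j * Y ω j) ℙ = gaussianReal 0 v)
    (hdep : ∃ i j, (∫ ω, X ω i * Y ω j) ≠ 0) :
    0 < (∫ ω, (∑ i, (X ω i) ^ 2) * (∑ j, (Y ω j) ^ 2))
        - (∫ ω, ∑ i, (X ω i) ^ 2) * (∫ ω, ∑ j, (Y ω j) ^ 2)
      ∧ ¬ IndepFun (fun ω => ∑ i, (X ω i) ^ 2) (fun ω => ∑ j, (Y ω j) ^ 2) ℙ := by
  have hXi : ∀ i, Measurable fun ω => X ω i := fun i => (measurable_pi_apply i).comp hX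
  have hYj : ∀ j, Measurable fun ω => Y ω j := fun j => (measurable_pi_apply j).comp hY
  have hpair : ∀ i j, Integrable (fun ω => X ω i ^ 2) ℙ ∧ Integrable (fun ω => Y ω j ^ 2) ℙ
      ∧ Integrable (fun ω => X ω i ^ 2 * Y ω j ^ 2) ℙ
      ∧ (∫ ω, X ω i ^ 2 * Y ω j ^ 2)
          = (∫ ω, X ω i ^ 2) * (∫ ω, Y ω j ^ 2) + 2 * (∫ ω, X ω i * Y ω j) ^ 2 := by
    intro i j
    refine pair_moment _ _ (hXi i) (hYj j) ?_
    intro a c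
    obtain ⟨v, hv⟩ := hGauss (fun k => if k = i then a else 0) (fun k => if k = j then c else 0)
    refine ⟨v, ?_⟩
    rw [← hv]
    congr 1
    funext ω
    simp [ite_mul, Finset.sum_ite_eq']
  obtain ⟨i0, j0, hc0⟩ := hdep
  have hIX : ∀ i, Integrable (fun ω => X ω i ^ 2) ℙ := fun i => (hpair i j0).1
  have hIY : ∀ j, Integrable (fun ω => Y ω j ^ 2) ℙ := fun j => (hpair i0 j).2.1
  have hIXY : ∀ i j, Integrable (fun ω => X ω i ^ 2 * Y ω j ^ 2) ℙ := fun i j =>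
    (hpair i j).2.2.1
  have hD : ∀ i j, (∫ ω, X ω i ^ 2 * Y ω j ^ 2)
      = (∫ ω, X ω i ^ 2) * (∫ ω, Y ω j ^ 2) + 2 * (∫ ω, X ω i * Y ω j) ^ 2 := fun i j =>
    (hpair i j).2.2.2
  have hsum1 : (∫ ω, (∑ i, X ω i ^ 2) * ∑ j, Y ω j ^ 2)
      = ∑ i, ∑ j, ∫ ω, X ω i ^ 2 * Y ω j ^ 2 := by
    have e : ∀ ω : Ω, (∑ i, X ω i ^ 2) * ∑ j, Y ω j ^ 2
        = ∑ i, ∑ j, X ω i ^ 2 * Y ω j ^ 2 := fun ω => Finset.sum_mul_sum _ _ _ _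
    calc ∫ ω, (∑ i, X ω i ^ 2) * ∑ j, Y ω j ^ 2
        = ∫ ω, ∑ i, ∑ j, X ω i ^ 2 * Y ω j ^ 2 := by simp_rw [e]
      _ = ∑ i, ∫ ω, ∑ j, X ω i ^ 2 * Y ω j ^ 2 := integral_finset_sum _ fun i _ =>
            integrable_finset_sum _ fun j _ => hIXY i j
      _ = ∑ i, ∑ j, ∫ ω, X ω i ^ 2 * Y ω j ^ 2 := Finset.sum_congr rfl fun i _ =>
            integral_finset_sum _ fun j _ => hIXY i j
  have hsum2 : (∫ ω, ∑ i, X ω i ^ 2) = ∑ i, ∫ ω, X ω i ^ 2 :=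
    integral_finset_sum _ fun i _ => hIX i
  have hsum3 : (∫ ω, ∑ j, Y ω j ^ 2) = ∑ j, ∫ ω, Y ω j ^ 2 :=
    integral_finset_sum _ fun j _ => hIY j
  have key : (∫ ω, (∑ i, X ω i ^ 2) * ∑ j, Y ω j ^ 2)
      - (∫ ω, ∑ i, X ω i ^ 2) * (∫ ω, ∑ j, Y ω j ^ 2)
      = ∑ i, ∑ j, 2 * (∫ ω, X ω i * Y ω j) ^ 2 := by
    rw [hsum1, hsum2, hsum3, Finset.sum_mul_sum, ← Finset.sum_sub_distrib]
    refine Finset.sum_congr rfl fun i _ => ?_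
    rw [← Finset.sum_sub_distrib]
    refine Finset.sum_congr rfl fun j _ => ?_
    rw [hD i j]
    ring
  have hpos : 0 < (∫ ω, (∑ i, (X ω i) ^ 2) * (∑ j, (Y ω j) ^ 2))
      - (∫ ω, ∑ i, (X ω i) ^ 2) * (∫ ω, ∑ j, (Y ω j) ^ 2) := by
    rw [key]
    refine Finset.sum_pos' (fun i _ => Finset.sum_nonneg fun j _ => by positivity)
      ⟨i0, Finset.mem_univ _, ?_⟩
    refine Finset.sum_pos' (fun j _ => by positivity) ⟨j0, Finset.mem_univ _, ?_⟩
    rcases hc0.lt_or_gt with h | h <;> nlinarith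
  refine ⟨hpos, fun hind => ?_⟩
  have hmf : Measurable fun ω => ∑ i, X ω i ^ 2 :=
    Finset.measurable_sum _ fun i _ => (hXi i).pow_const 2
  have hmg : Measurable fun ω => ∑ j, Y ω j ^ 2 :=
    Finset.measurable_sum _ fun j _ => (hYj j).pow_const 2
  have heq := hind.integral_fun_mul_eq_mul_integral hmf.aestronglyMeasurable hmg.aestronglyMeasurable
  rw [heq] at hpos
  simp at hpos
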